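/- Let N be a positive integer and let S be the set of matrices ((a,b),(c,d)) ∈ Γ0(N) with c > 0, d > 0, and d ≡ 1 (mod 4). If 4 does not divide N, then S generates Γ0(N) (so two group homomorphisms from Γ0(N) to an abelian group that agree on S are equal). For arbitrary N, the set S together with the matrix −I generates Γ0(N). -/

import Mathlib

open Matrix MatrixGroups CongruenceSubgroup Subgroup

private def SS (N : ℕ) : Set SL(2, ℤ) :=
  {A : SL(2, ℤ) | A ∈ Gamma0 N ∧ 0 < A 1 0 ∧ 0 < A 1 1 ∧ A 1 1 ≡ 1 [ZMOD 4]}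

private def mk2 (a b c d : ℤ) (h : a * d - b * c = 1) : SL(2, ℤ) :=
  ⟨!![a, b; c, d], by simpa [Matrix.det_fin_two_of] using h⟩

@[simp] private lemma mk2_00 (a b c d h) : (mk2 a b c d h) 0 0 = a := by simp [mk2]
@[simp] private lemma mk2_01 (a b c d h) : (mk2 a b c d h) 0 1 = b := by simp [mk2]
@[simp] private lemma mk2_10 (a b c d h) : (mk2 a b c d h) 1 0 = c := by simp [mk2]
@[simp] private lemma mk2_11 (a b c d h) : (mk2 a b c d h) 1 1 = d := by simp [mk2]

private lemma mul10 (A B : SL(2,ℤ)) : (A*B) 1 0 = A 1 0 * B 0 0 + A 1 1 * B 1 0 := by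
  simp [Matrix.mul_apply, Fin.sum_univ_two]
private lemma mul11 (A B : SL(2,ℤ)) : (A*B) 1 1 = A 1 0 * B 0 1 + A 1 1 * B 1 1 := by
  simp [Matrix.mul_apply, Fin.sum_univ_two]

private lemma mem_SS {N : ℕ} {A : SL(2,ℤ)} :
    A ∈ SS N ↔ (N:ℤ) ∣ A 1 0 ∧ 0 < A 1 0 ∧ 0 < A 1 1 ∧ A 1 1 % 4 = 1 := by
  have h1 : (A ∈ Gamma0 N) ↔ (N:ℤ) ∣ A 1 0 := by
    rw [Gamma0_mem, ZMod.intCast_zmod_eq_zero_iff_dvd]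
  have h2 : (A 1 1 ≡ 1 [ZMOD 4]) ↔ A 1 1 % 4 = 1 := by
    unfold Int.ModEq; norm_num
  rw [SS, Set.mem_setOf_eq, h1, h2]

private def Tpow (n : ℤ) : SL(2,ℤ) := mk2 1 n 0 1 (by ring)
private def Upow (N : ℕ) (k : ℤ) : SL(2,ℤ) := mk2 1 0 (k*N) 1 (by ring)

private lemma Tpow_mul (m n : ℤ) : Tpow m * Tpow n = Tpow (m+n) := by
  apply Subtype.ext
  simp only [Matrix.SpecialLinearGroup.coe_mul]
  ext i j
  fin_cases i <;> fin_cases j <;>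
    simp [Tpow, mk2, Matrix.mul_apply, Fin.sum_univ_two] <;> ring

private lemma Upow_mul (N : ℕ) (m n : ℤ) : Upow N m * Upow N n = Upow N (m+n) := by
  apply Subtype.ext
  simp only [Matrix.SpecialLinearGroup.coe_mul]
  ext i j
  fin_cases i <;> fin_cases j <;>
    simp [Upow, mk2, Matrix.mul_apply, Fin.sum_univ_two] <;> ring

private lemma Tpow_zero : Tpow 0 = 1 := by
  apply Subtype.ext
  ext i j
  fin_cases i <;> fin_cases j <;> simp [Tpow, mk2]

private lemma Upow_zero (N : ℕ) : Upow N 0 = 1 := by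
  apply Subtype.ext
  ext i j
  fin_cases i <;> fin_cases j <;> simp [Upow, mk2]

private lemma T_mem {N : ℕ} (hN : 0 < N) : Tpow 1 ∈ Subgroup.closure (SS N) := by
  have hB : mk2 1 0 (4*N) 1 (by ring) ∈ SS N := by
    rw [mem_SS]
    simp only [mk2_10, mk2_11]
    exact ⟨⟨4, by ring⟩, by omega, one_pos, by norm_num⟩
  have hC : mk2 1 1 (4*N) (4*N+1) (by ring) ∈ SS N := by
    rw [mem_SS]
    simp only [mk2_10, mk2_11]
    exact ⟨⟨4, by ring⟩, by omega, by omega, by omega⟩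
  have key : mk2 1 0 (4*N) 1 (by ring) * Tpow 1 = mk2 1 1 (4*N) (4*N+1) (by ring) := by
    apply Subtype.ext
    simp only [Matrix.SpecialLinearGroup.coe_mul]
    ext i j
    fin_cases i <;> fin_cases j <;>
      simp [Tpow, mk2, Matrix.mul_apply, Fin.sum_univ_two]
  have hT : Tpow 1 = (mk2 1 0 (4*N) 1 (by ring))⁻¹ * mk2 1 1 (4*N) (4*N+1) (by ring) := by
    rw [← key]; group
  rw [hT]
  exact mul_mem (inv_mem (Subgroup.subset_closure hB)) (Subgroup.subset_closure hC)

private lemma Tpow_mem {N : ℕ} (hN : 0 < N) (n : ℤ) : Tpow n ∈ Subgroup.closure (SS N) := by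
  induction n using Int.induction_on with
  | zero => rw [Tpow_zero]; exact one_mem _
  | succ n ih => rw [← Tpow_mul]; exact mul_mem ih (T_mem hN)
  | pred n ih =>
      have h : Tpow (-n-1) = Tpow (-n) * (Tpow 1)⁻¹ := by
        rw [eq_mul_inv_iff_mul_eq, Tpow_mul]; norm_num
      rw [h]
      exact mul_mem ih (inv_mem (T_mem hN))

private lemma U_mem {N : ℕ} (hN : 0 < N) : Upow N 1 ∈ Subgroup.closure (SS N) := by
  apply Subgroup.subset_closure
  rw [mem_SS]
  simp only [Upow, mk2_10, mk2_11]
  exact ⟨⟨1, by ring⟩, by omega, one_pos, by norm_num⟩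

private lemma Upow_mem {N : ℕ} (hN : 0 < N) (k : ℤ) : Upow N k ∈ Subgroup.closure (SS N) := by
  induction k using Int.induction_on with
  | zero => rw [Upow_zero]; exact one_mem _
  | succ n ih => rw [← Upow_mul]; exact mul_mem ih (U_mem hN)
  | pred n ih =>
      have h : Upow N (-n-1) = Upow N (-n) * (Upow N 1)⁻¹ := by
        rw [eq_mul_inv_iff_mul_eq, Upow_mul]; norm_num
      rw [h]
      exact mul_mem ih (inv_mem (U_mem hN))

private lemma pos_step (c d : ℤ) (hc : c ≠ 0) (hd : d % 4 = 1) :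
    ∃ n, 0 < d + c*n ∧ (d + c*n) % 4 = 1 := by
  refine ⟨c*(4*(|d|+1)), ?_, ?_⟩
  · have h1 : 1 ≤ c*c := by have := mul_self_pos.mpr hc; omega
    have h2 : -|d| ≤ d := neg_abs_le d
    nlinarith [abs_nonneg d]
  · have h : d + c*(c*(4*(|d|+1))) = d + 4*(c*c*(|d|+1)) := by ring
    rw [h]; omega

private lemma residue (c d : ℤ) (hpar : c % 2 = 0 → d % 2 = 1) :
    ∃ ε n, (ε = 1 ∨ ε = -1) ∧ (ε*(d + c*n)) % 4 = 1 := by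
  rcases Int.even_or_odd c with he | ho
  · have hc2 : c % 2 = 0 := Int.even_iff.mp he
    have hd2 : d % 2 = 1 := hpar hc2
    rcases (show d % 4 = 1 ∨ d % 4 = 3 by omega) with hd4 | hd4
    · refine ⟨1, 0, Or.inl rfl, ?_⟩
      have h : (1:ℤ)*(d + c*0) = d := by ring
      rw [h]; exact hd4
    · rcases (show c % 4 = 0 ∨ c % 4 = 2 by omega) with hc4 | hc4
      · refine ⟨-1, 0, Or.inr rfl, ?_⟩
        have h : (-1:ℤ)*(d + c*0) = -d := by ring
        rw [h]; omega
      · refine ⟨1, 1, Or.inl rfl, ?_⟩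
        have h : (1:ℤ)*(d + c*1) = d + c := by ring
        rw [h]; omega
  · have hc2 : c % 2 = 1 := Int.odd_iff.mp ho
    obtain ⟨m, hm⟩ : ∃ m, c = 2*m+1 := ⟨c/2, by omega⟩
    refine ⟨1, (1-d)*c, Or.inl rfl, ?_⟩
    have h : (1:ℤ)*(d + c*((1-d)*c)) = 1 + 4*((1-d)*(m*m+m)) := by subst hm; ring
    rw [h]; omega

private lemma arith (c d : ℤ) (hc : c ≠ 0) (hpar : c % 2 = 0 → d % 2 = 1) :
    ∃ ε n, (ε = 1 ∨ ε = -1) ∧ 0 < ε*(d + c*n) ∧ (ε*(d + c*n)) % 4 = 1 := by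
  obtain ⟨ε, n₀, hε, hmod⟩ := residue c d hpar
  have hεc : ε*c ≠ 0 := by rcases hε with rfl | rfl <;> simpa using hc
  obtain ⟨n₁, hp, hm⟩ := pos_step (ε*c) (ε*(d + c*n₀)) hεc hmod
  have key : ε*(d + c*(n₀+n₁)) = ε*(d + c*n₀) + (ε*c)*n₁ := by ring
  exact ⟨ε, n₀ + n₁, hε, by rw [key]; exact hp, by rw [key]; exact hm⟩

private lemma reduce {N : ℕ} (hN : 0 < N) (A : SL(2,ℤ)) (hdvd : (N:ℤ) ∣ A 1 0)
    (n : ℤ) (h1 : 0 < A 1 1 + A 1 0 * n) (h2 : (A 1 1 + A 1 0 * n) % 4 = 1) :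
    A ∈ Subgroup.closure (SS N) := by
  set k : ℤ := |A 1 0| + 1 with hk
  have hM10 : (A * Tpow n) 1 0 = A 1 0 := by
    rw [mul10]; simp [Tpow]
  have hM11 : (A * Tpow n) 1 1 = A 1 1 + A 1 0 * n := by
    rw [mul11]; simp [Tpow]; ring
  have e10 : (A * Tpow n * Upow N k) 1 0 = A 1 0 + (A 1 1 + A 1 0 * n) * (k*N) := by
    rw [mul10 (A * Tpow n), hM10, hM11]
    simp only [Upow, mk2_00, mk2_10]
    ring
  have e11 : (A * Tpow n * Upow N k) 1 1 = A 1 1 + A 1 0 * n := by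
    rw [mul11 (A * Tpow n), hM10, hM11]
    simp only [Upow, mk2_01, mk2_11]
    ring
  have hN1 : (1:ℤ) ≤ N := by exact_mod_cast hN
  have hk0 : 0 < k := by have := abs_nonneg (A 1 0); omega
  have hd1 : 1 ≤ A 1 1 + A 1 0 * n := h1
  have h5 : k ≤ k * N := le_mul_of_one_le_right hk0.le hN1
  have h6 : k*N ≤ (A 1 1 + A 1 0 * n) * (k*N) := le_mul_of_one_le_left (by positivity) hd1
  have hmem : A * Tpow n * Upow N k ∈ SS N := by
    rw [mem_SS, e10, e11]
    refine ⟨?_, ?_, h1, h2⟩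
    · exact dvd_add hdvd (Dvd.dvd.mul_left ⟨k, by ring⟩ _)
    · have h7 : -|A 1 0| ≤ A 1 0 := neg_abs_le _
      linarith
  have hA : A = (A * Tpow n * Upow N k) * (Upow N k)⁻¹ * (Tpow n)⁻¹ := by group
  rw [hA]
  exact mul_mem (mul_mem (Subgroup.subset_closure hmem) (inv_mem (Upow_mem hN k)))
    (inv_mem (Tpow_mem hN n))

private lemma claimA {N : ℕ} (hN : 0 < N) (A : SL(2,ℤ)) (hA : A ∈ Gamma0 N) :
    A ∈ Subgroup.closure (SS N) ∨ -A ∈ Subgroup.closure (SS N) := by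
  have hdet : A 0 0 * A 1 1 - A 0 1 * A 1 0 = 1 := by
    have := A.2; rwa [Matrix.det_fin_two] at this
  have hdvd : (N:ℤ) ∣ A 1 0 := by
    rw [Gamma0_mem] at hA; exact (ZMod.intCast_zmod_eq_zero_iff_dvd _ _).mp hA
  by_cases hc : A 1 0 = 0
  · have had : A 0 0 * A 1 1 = 1 := by
      have h := hdet; rw [hc] at h; simpa using h
    rcases Int.mul_eq_one_iff_eq_one_or_neg_one.mp had with ⟨ha, hd⟩ | ⟨ha, hd⟩
    · left
      have hAT : A = Tpow (A 0 1) := by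
        apply Subtype.ext
        ext i j
        fin_cases i <;> fin_cases j <;> simp [Tpow, mk2, ha, hd, hc]
      rw [hAT]; exact Tpow_mem hN _
    · right
      have hAT : -A = Tpow (-(A 0 1)) := by
        apply Subtype.ext
        ext i j
        fin_cases i <;> fin_cases j <;>
          simp [Tpow, mk2, ha, hd, hc]
      rw [hAT]; exact Tpow_mem hN _
  · have hpar : A 1 0 % 2 = 0 → A 1 1 % 2 = 1 := by
      intro h2
      by_contra h
      obtain ⟨u, hu⟩ : ∃ u, A 1 0 = 2*u := ⟨A 1 0 / 2, by omega⟩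
      obtain ⟨v, hv⟩ : ∃ v, A 1 1 = 2*v := ⟨A 1 1 / 2, by omega⟩
      have h3 : 2*(A 0 0 * v - A 0 1 * u) = 1 := by
        rw [hu, hv] at hdet; linarith [hdet]
      obtain ⟨z, hz⟩ : ∃ z, 2*z = (1:ℤ) := ⟨_, h3⟩
      omega
    obtain ⟨ε, n, hε, hpos, hmod⟩ := arith (A 1 0) (A 1 1) hc hpar
    rcases hε with rfl | rfl
    · left
      rw [one_mul] at hpos hmod
      exact reduce hN A hdvd n hpos hmod
    · right
      have e10 : (-A) 1 0 = -(A 1 0) := by simp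
      have e11 : (-A) 1 1 = -(A 1 1) := by simp
      have hdvd' : (N:ℤ) ∣ (-A) 1 0 := by rw [e10]; exact dvd_neg.mpr hdvd
      have key : -(A 1 1) + -(A 1 0)*n = -1*(A 1 1 + A 1 0*n) := by ring
      apply reduce hN (-A) hdvd' n
      · rw [e10, e11, key]; exact hpos
      · rw [e10, e11, key]; exact hmod

private lemma negone_mem {N : ℕ} (hN : 0 < N) (h4 : ¬ (4 ∣ N)) :
    (-1 : SL(2,ℤ)) ∈ Subgroup.closure (SS N) := by
  rcases Nat.even_or_odd N with he | ho
  · -- N % 4 = 2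
    have hN4 : (N:ℤ) % 4 = 2 := by
      have h2 : N % 2 = 0 := Nat.even_iff.mp he
      omega
    have hdet1 : (-1 : ℤ) * ((N:ℤ)-1) - (-1)*(N:ℤ) = 1 := by ring
    have hdet2 : (-(((N:ℤ))-1)) * 1 - (-1)*(N:ℤ) = 1 := by ring
    have hB : mk2 (-1) (-1) N ((N:ℤ)-1) hdet1 ∈ SS N := by
      rw [mem_SS]; simp only [mk2_10, mk2_11]
      exact ⟨⟨1, by ring⟩, by omega, by omega, by omega⟩
    have hC : mk2 (-(((N:ℤ))-1)) (-1) N 1 hdet2 ∈ SS N := by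
      rw [mem_SS]; simp only [mk2_10, mk2_11]
      exact ⟨⟨1, by ring⟩, by omega, one_pos, by norm_num⟩
    have key : mk2 (-1) (-1) N ((N:ℤ)-1) hdet1 * mk2 (-(((N:ℤ))-1)) (-1) N 1 hdet2
        = (-1 : SL(2,ℤ)) := by
      apply Subtype.ext
      simp only [Matrix.SpecialLinearGroup.coe_mul]
      ext i j
      fin_cases i <;> fin_cases j <;>
        simp [mk2, Matrix.mul_apply, Fin.sum_univ_two, Matrix.one_apply] <;> ring
    rw [← key]
    exact mul_mem (Subgroup.subset_closure hB) (Subgroup.subset_closure hC)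
  · have hN2 : (N:ℤ) % 2 = 1 := by
      have h2 : N % 2 = 1 := Nat.odd_iff.mp ho
      omega
    have hdet1 : (-1 : ℤ) * (2*(N:ℤ)-1) - (-2)*(N:ℤ) = 1 := by ring
    have hdet2 : (-(2*(N:ℤ)-1)) * 1 - (-2)*(N:ℤ) = 1 := by ring
    have hB : mk2 (-1) (-2) N (2*(N:ℤ)-1) hdet1 ∈ SS N := by
      rw [mem_SS]; simp only [mk2_10, mk2_11]
      exact ⟨⟨1, by ring⟩, by omega, by omega, by omega⟩
    have hC : mk2 (-(2*(N:ℤ)-1)) (-2) N 1 hdet2 ∈ SS N := by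
      rw [mem_SS]; simp only [mk2_10, mk2_11]
      exact ⟨⟨1, by ring⟩, by omega, one_pos, by norm_num⟩
    have key : mk2 (-1) (-2) N (2*(N:ℤ)-1) hdet1 * mk2 (-(2*(N:ℤ)-1)) (-2) N 1 hdet2
        = (-1 : SL(2,ℤ)) := by
      apply Subtype.ext
      simp only [Matrix.SpecialLinearGroup.coe_mul]
      ext i j
      fin_cases i <;> fin_cases j <;>
        simp [mk2, Matrix.mul_apply, Fin.sum_univ_two, Matrix.one_apply] <;> ring
    rw [← key]
    exact mul_mem (Subgroup.subset_closure hB) (Subgroup.subset_closure hC)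

private lemma negone_gamma0 {N : ℕ} : (-1 : SL(2,ℤ)) ∈ Gamma0 N := by
  simp [Gamma0_mem]

/-- Let `N > 0` and let `S` be the set of matrices in `Γ₀(N)` with
`c > 0`, `d > 0` and `d ≡ 1 (mod 4)`.  If `4 ∤ N` then `S` generates `Γ₀(N)`; for
arbitrary `N`, `S` together with `-I` generates `Γ₀(N)`. -/
theorem Gamma0_generated_by_positive_entries (N : ℕ) (hN : 0 < N) :
    (¬ (4 ∣ N) →
      Subgroup.closure {A : SL(2, ℤ) | A ∈ Gamma0 N ∧
          0 < A 1 0 ∧ 0 < A 1 1 ∧ A 1 1 ≡ 1 [ZMOD 4]} = Gamma0 N) ∧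
    Subgroup.closure ({A : SL(2, ℤ) | A ∈ Gamma0 N ∧
          0 < A 1 0 ∧ 0 < A 1 1 ∧ A 1 1 ≡ 1 [ZMOD 4]} ∪ {(-1 : SL(2, ℤ))}) =
      Gamma0 N := by
  have hsub : SS N ⊆ (Gamma0 N : Set SL(2,ℤ)) := fun A hA => hA.1
  constructor
  · intro h4
    apply le_antisymm
    · rw [Subgroup.closure_le]; exact hsub
    · intro A hA
      rcases claimA hN A hA with h | h
      · exact h
      · have := mul_mem (negone_mem hN h4) h
        simpa [SS] using this
  · apply le_antisymm
    · rw [Subgroup.closure_le]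
      rintro A (hA | hA)
      · exact hA.1
      · rw [Set.mem_singleton_iff] at hA
        rw [hA]
        exact negone_gamma0
    · intro A hA
      rcases claimA hN A hA with h | h
      · exact Subgroup.closure_mono Set.subset_union_left h
      · have h1 : (-1 : SL(2,ℤ)) ∈ Subgroup.closure (SS N ∪ {(-1 : SL(2,ℤ))}) :=
          Subgroup.subset_closure (Or.inr rfl)
        have h2 := mul_mem h1 (Subgroup.closure_mono (Set.subset_union_left) h)
        simpa [SS] using h2
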